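/- Perron–Frobenius under discrete Doeblin minorization (simplicity and peripheral uniqueness): Let n be a nonempty finite index type and A an n×n real matrix with nonnegative entries. Suppose there exist α > 0 and vectors u, g : n → ℝ with u i > 0 and g j > 0 for all i, j, such that A i j ≥ α · u i · g j for all i, j. Then there exist r > 0 and w : n → ℝ with w i > 0 for all i and A *ᵥ w = r • w such that: (1) the eigenspace of A at r is one-dimensional, i.e. every v : n → ℂ with Aℂ *ᵥ v = r • v is a complex scalar multiple of the complexification of w; and (2) r is the only eigenvalue of A of modulus r: every μ in the spectrum of Aℂ with ‖μ‖ = r satisfies μ = r, and all other eigenvalues have modulus strictly bounded by r in the sense ‖μ‖ ≤ r. -/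

import Mathlib

open scoped Matrix
open Finset

lemma pf_mulVec_pos {n : Type*} [Fintype n] [Nonempty n]
    (A : Matrix n n ℝ) (hpos : ∀ i j, 0 < A i j) {x : n → ℝ}
    (hx : ∀ i, 0 ≤ x i) (hx0 : ∃ j, 0 < x j) (i : n) : 0 < (A *ᵥ x) i := by
  obtain ⟨j₀, hj₀⟩ := hx0
  have : 0 < ∑ j, A i j * x j := by
    apply Finset.sum_pos' (fun j _ => mul_nonneg (hpos i j).le (hx j))
    exact ⟨j₀, Finset.mem_univ _, mul_pos (hpos i j₀) hj₀⟩
  simpa [Matrix.mulVec, dotProduct] using this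

lemma pf_exists {n : Type*} [Fintype n] [Nonempty n]
    (A : Matrix n n ℝ) (hpos : ∀ i j, 0 < A i j) :
    ∃ r : ℝ, 0 < r ∧ ∃ w : n → ℝ, (∀ i, 0 < w i) ∧ A *ᵥ w = r • w := by
  classical
  set S : Set (n → ℝ) := {x | (∀ i, 0 ≤ x i) ∧ ∑ i, x i = 1} with hS
  -- positivity on S
  have hApos : ∀ x ∈ S, ∀ i, 0 < (A *ᵥ x) i := by
    intro x hx i
    refine pf_mulVec_pos A hpos hx.1 ?_ i
    by_contra h
    push_neg at h
    have : ∀ j, x j = 0 := fun j => le_antisymm (h j) (hx.1 j)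
    have h1 := hx.2
    rw [Finset.sum_congr rfl (fun j _ => this j)] at h1
    simpa using h1
  set σ : (n → ℝ) → ℝ := fun x => ∑ i, (A *ᵥ x) i with hσ
  have hσpos : ∀ x ∈ S, 0 < σ x := fun x hx =>
    Finset.sum_pos (fun i _ => hApos x hx i) Finset.univ_nonempty
  set N : (n → ℝ) → (n → ℝ) := fun x => (σ x)⁻¹ • (A *ᵥ x) with hN
  have hNS : ∀ x ∈ S, N x ∈ S := by
    intro x hx
    constructor
    · intro i
      exact mul_nonneg (inv_nonneg.2 (hσpos x hx).le) (hApos x hx i).le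
    · simp only [hN, Pi.smul_apply, smul_eq_mul, ← Finset.mul_sum]
      exact inv_mul_cancel₀ (hσpos x hx).ne'
  have hNpos : ∀ x ∈ S, ∀ i, 0 < N x i := by
    intro x hx i
    exact mul_pos (inv_pos.2 (hσpos x hx)) (hApos x hx i)
  -- S compact
  have hScl : IsClosed S := by
    have h1 : IsClosed {x : n → ℝ | ∀ i, 0 ≤ x i} := by
      have he : {x : n → ℝ | ∀ i, 0 ≤ x i} = ⋂ i, {x : n → ℝ | 0 ≤ x i} := by
        ext x; simp [Set.mem_iInter]
      rw [he]
      exact isClosed_iInter fun i => isClosed_le continuous_const (continuous_apply i)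
    have h2 : IsClosed {x : n → ℝ | ∑ i, x i = 1} :=
      isClosed_eq (by continuity) continuous_const
    exact h1.inter h2
  have hSbd : Bornology.IsBounded S := by
    rw [Metric.isBounded_iff_subset_closedBall 0]
    refine ⟨1, fun x hx => ?_⟩
    simp only [Metric.mem_closedBall, dist_zero_right]
    rw [pi_norm_le_iff_of_nonneg zero_le_one]
    intro i
    rw [Real.norm_eq_abs, abs_of_nonneg (hx.1 i)]
    calc x i ≤ ∑ j, x j := Finset.single_le_sum (fun j _ => hx.1 j) (Finset.mem_univ i)
    _ = 1 := hx.2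
  have hScompact : IsCompact S := Metric.isCompact_of_isClosed_isBounded hScl hSbd
  have hSne : S.Nonempty := by
    refine ⟨fun _ => (Fintype.card n : ℝ)⁻¹, fun i => by positivity, ?_⟩
    rw [Finset.sum_const, Finset.card_univ, nsmul_eq_mul,
      mul_inv_cancel₀ (by exact_mod_cast Fintype.card_ne_zero)]
  -- continuity of N on S
  have hmulVec_cont : Continuous fun x : n → ℝ => A *ᵥ x := by
    have := (A.mulVecLin).continuous_of_finiteDimensional
    exact this
  have hσcont : Continuous σ := by
    apply continuous_finset_sum
    exact fun i _ => (continuous_apply i).comp hmulVec_cont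
  have hNcont : ContinuousOn N S := by
    apply ContinuousOn.smul (f := fun x => (σ x)⁻¹) (g := fun x => A *ᵥ x)
    · exact (hσcont.continuousOn).inv₀ (fun x hx => (hσpos x hx).ne')
    · exact hmulVec_cont.continuousOn
  set K : Set (n → ℝ) := N '' S with hK
  have hKcompact : IsCompact K := hScompact.image_of_continuousOn hNcont
  have hKS : K ⊆ S := by rintro _ ⟨x, hx, rfl⟩; exact hNS x hx
  have hKpos : ∀ y ∈ K, ∀ i, 0 < y i := by rintro _ ⟨x, hx, rfl⟩ i; exact hNpos x hx i
  have hKne : K.Nonempty := hSne.image N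
  -- the function f
  set f : (n → ℝ) → ℝ := fun x => Finset.univ.inf' Finset.univ_nonempty
    (fun i => (A *ᵥ x) i / x i) with hf
  have hfcont : ContinuousOn f K := by
    intro x hx
    apply ContinuousWithinAt.finset_inf'_apply
    intro i _
    apply ContinuousWithinAt.div
    · exact ((continuous_apply i).comp hmulVec_cont).continuousWithinAt
    · exact (continuous_apply i).continuousWithinAt
    · exact (hKpos x hx i).ne'
  obtain ⟨w, hwK, hwmax⟩ := hKcompact.exists_isMaxOn hKne hfcont
  have hwpos : ∀ i, 0 < w i := hKpos w hwK
  set r : ℝ := f w with hr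
  have hrle : ∀ i, r * w i ≤ (A *ᵥ w) i := by
    intro i
    have h1 : r ≤ (A *ᵥ w) i / w i := Finset.inf'_le _ (Finset.mem_univ i)
    rwa [le_div_iff₀ (hwpos i)] at h1
  have hrpos : 0 < r := by
    rw [hr, hf, Finset.lt_inf'_iff]
    intro i _
    exact div_pos (hApos w (hKS hwK) i) (hwpos i)
  refine ⟨r, hrpos, w, hwpos, ?_⟩
  by_contra hne
  have hstrict : ∃ i₀, r * w i₀ < (A *ᵥ w) i₀ := by
    by_contra h
    push_neg at h
    apply hne
    funext i
    have := le_antisymm (h i) (hrle i)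
    simp [Pi.smul_apply, smul_eq_mul, ← this]
  obtain ⟨i₀, hi₀⟩ := hstrict
  set z : n → ℝ := A *ᵥ w - r • w with hz
  have hznn : ∀ j, 0 ≤ z j := fun j => by
    simp only [hz, Pi.sub_apply, Pi.smul_apply, smul_eq_mul]; linarith [hrle j]
  have hzpos : 0 < z i₀ := by
    simp only [hz, Pi.sub_apply, Pi.smul_apply, smul_eq_mul]; linarith
  have hAz : ∀ i, 0 < (A *ᵥ z) i := fun i =>
    pf_mulVec_pos A hpos hznn ⟨i₀, hzpos⟩ i
  -- y = N w beats w
  have hyK : N w ∈ K := ⟨w, hKS hwK, rfl⟩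
  have hyf : r < f (N w) := by
    rw [hf, Finset.lt_inf'_iff]
    intro i _
    have hc := hσpos w (hKS hwK)
    have hNwi : N w i = (σ w)⁻¹ * (A *ᵥ w) i := rfl
    have hANw : (A *ᵥ N w) i = (σ w)⁻¹ * (A *ᵥ (A *ᵥ w)) i := by
      simp [hN, Matrix.mulVec_smul]
    rw [hNwi, hANw, mul_div_mul_left _ _ (inv_ne_zero hc.ne'),
      lt_div_iff₀ (hApos w (hKS hwK) i)]
    have hAzi : (A *ᵥ z) i = (A *ᵥ (A *ᵥ w)) i - r * (A *ᵥ w) i := by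
      simp [hz, Matrix.mulVec_sub, Matrix.mulVec_smul]
    have := hAz i
    linarith
  exact absurd (hwmax hyK) (not_le.2 hyf)

lemma pf_unique_real {n : Type*} [Fintype n] [Nonempty n]
    (A : Matrix n n ℝ) (hpos : ∀ i j, 0 < A i j) (r : ℝ) (w : n → ℝ)
    (hw : ∀ i, 0 < w i) (hAw : A *ᵥ w = r • w)
    (x : n → ℝ) (hx : A *ᵥ x = r • x) : ∃ c : ℝ, x = c • w := by
  classical
  obtain ⟨i₀, -, hi₀⟩ := Finset.exists_min_image Finset.univ
    (fun i => x i / w i) Finset.univ_nonempty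
  set c : ℝ := x i₀ / w i₀ with hc
  set z : n → ℝ := x - c • w with hz
  have hznn : ∀ j, 0 ≤ z j := by
    intro j
    have h1 : c ≤ x j / w j := hi₀ j (Finset.mem_univ j)
    rw [le_div_iff₀ (hw j)] at h1
    simp only [hz, Pi.sub_apply, Pi.smul_apply, smul_eq_mul]
    linarith
  have hzi₀ : z i₀ = 0 := by
    simp only [hz, Pi.sub_apply, Pi.smul_apply, smul_eq_mul, hc]
    rw [div_mul_cancel₀ _ (hw i₀).ne', sub_self]
  have hAz : A *ᵥ z = r • z := by
    rw [hz, Matrix.mulVec_sub, Matrix.mulVec_smul, hAw, hx, smul_sub, smul_comm]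
  have hz0 : z = 0 := by
    by_contra h
    have hex : ∃ j, 0 < z j := by
      by_contra h2
      push_neg at h2
      exact h (funext fun j => le_antisymm (h2 j) (hznn j))
    have h1 : 0 < (A *ᵥ z) i₀ := pf_mulVec_pos A hpos hznn hex i₀
    rw [hAz] at h1
    simp [hzi₀] at h1
  refine ⟨c, ?_⟩
  have := sub_eq_zero.1 (hz ▸ hz0)
  rw [hz] at hz0
  exact sub_eq_zero.1 hz0

lemma pf_triangle_eq {n : Type*} [Fintype n]
    (a : n → ℂ) (hne : (∑ j, a j) ≠ 0)
    (h : ‖∑ j, a j‖ = ∑ j, ‖a j‖) :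
    ∃ ζ : ℂ, ‖ζ‖ = 1 ∧ ∀ j, a j = (‖a j‖ : ℂ) * ζ := by
  classical
  set T : ℂ := ∑ j, a j with hT
  set ζ : ℂ := T / ‖T‖ with hζ
  have hTnorm : (0:ℝ) < ‖T‖ := norm_pos_iff.2 hne
  have hζnorm : ‖ζ‖ = 1 := by
    rw [hζ, norm_div, Complex.norm_real, Real.norm_eq_abs, abs_of_pos hTnorm]
    exact div_self hTnorm.ne'
  refine ⟨ζ, hζnorm, ?_⟩
  have hζζ : ζ * (starRingEnd ℂ) ζ = 1 := by
    rw [Complex.mul_conj, Complex.normSq_eq_norm_sq, hζnorm]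
    norm_num
  have hTζ : T = (‖T‖ : ℂ) * ζ := by
    rw [hζ, mul_div_cancel₀]
    exact_mod_cast hTnorm.ne'
  have key : ∀ j, ((starRingEnd ℂ) ζ * a j).re = ‖a j‖ := by
    have hle : ∀ j, ((starRingEnd ℂ) ζ * a j).re ≤ ‖a j‖ := by
      intro j
      calc ((starRingEnd ℂ) ζ * a j).re ≤ ‖(starRingEnd ℂ) ζ * a j‖ := Complex.re_le_norm _
      _ = ‖ζ‖ * ‖a j‖ := by rw [norm_mul, Complex.norm_conj]
      _ = ‖a j‖ := by rw [hζnorm, one_mul]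
    have hsum : ∑ j, ((starRingEnd ℂ) ζ * a j).re = ∑ j, ‖a j‖ := by
      have h1 : (starRingEnd ℂ) ζ * T = (‖T‖ : ℂ) := by
        conv_lhs => rw [hTζ]
        rw [mul_comm ((‖T‖ : ℂ)) ζ, ← mul_assoc, mul_comm ((starRingEnd ℂ) ζ) ζ, hζζ, one_mul]
      calc ∑ j, ((starRingEnd ℂ) ζ * a j).re = ((starRingEnd ℂ) ζ * T).re := by
            rw [hT, Finset.mul_sum, Complex.re_sum]
      _ = ‖T‖ := by rw [h1, Complex.ofReal_re]
      _ = ∑ j, ‖a j‖ := h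
    intro j
    by_contra hne'
    have hlt : ((starRingEnd ℂ) ζ * a j).re < ‖a j‖ := lt_of_le_of_ne (hle j) hne'
    have : ∑ j, ((starRingEnd ℂ) ζ * a j).re < ∑ j, ‖a j‖ :=
      Finset.sum_lt_sum (fun i _ => hle i) ⟨j, Finset.mem_univ j, hlt⟩
    exact absurd hsum this.ne
  intro j
  set z : ℂ := (starRingEnd ℂ) ζ * a j with hzdef
  have hz1 : z.re = ‖z‖ := by
    rw [key j, norm_mul, Complex.norm_conj, hζnorm, one_mul]
  have hzim : z.im = 0 := by
    have h2 : z.re * z.re + z.im * z.im = ‖z‖ ^ 2 := by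
      rw [Complex.sq_norm, Complex.normSq_apply]
    have h3 : z.im * z.im = 0 := by
      have h4 : ‖z‖ ^ 2 = z.re * z.re := by rw [← hz1]; ring
      linarith [h2, h4]
    exact mul_self_eq_zero.1 h3
  have hzeq : z = (‖a j‖ : ℂ) := by
    apply Complex.ext
    · rw [key j, Complex.ofReal_re]
    · rw [hzim, Complex.ofReal_im]
  calc a j = ζ * z := by rw [hzdef, ← mul_assoc, hζζ, one_mul]
  _ = (‖a j‖ : ℂ) * ζ := by rw [hzeq]; ring

lemma pf_spec_eigen {n : Type*} [Fintype n] [DecidableEq n]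
    (M : Matrix n n ℂ) {μ : ℂ} (hμ : μ ∈ spectrum ℂ M) :
    ∃ v : n → ℂ, v ≠ 0 ∧ M *ᵥ v = μ • v := by
  rw [← AlgEquiv.spectrum_eq (Matrix.toLinAlgEquiv' (R := ℂ) (n := n)) M] at hμ
  have h := Module.End.hasEigenvalue_iff_mem_spectrum.2 hμ
  obtain ⟨v, hv⟩ := h.exists_hasEigenvector
  refine ⟨v, hv.2, ?_⟩
  have := hv.apply_eq_smul
  simpa [Matrix.toLinAlgEquiv'_apply] using this

/-- Perron–Frobenius under discrete Doeblin minorization (simplicity and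
peripheral uniqueness): if `A` is nonnegative with `A i j ≥ α · u i · g j`
for some `α > 0` and strictly positive `u, g`, then there are `r > 0` and a
strictly positive `w` with `A *ᵥ w = r • w` such that (1) every complex
eigenvector of the complexified matrix at `r` is a scalar multiple of the
complexification of `w`, and (2) every eigenvalue `μ` satisfies `‖μ‖ ≤ r`,
and `‖μ‖ = r` forces `μ = r`. -/
theorem perron_frobenius_doeblin_simplicity
    {n : Type*} [Fintype n] [DecidableEq n] [Nonempty n]
    (A : Matrix n n ℝ) (hA : ∀ i j, 0 ≤ A i j)
    (α : ℝ) (hα : 0 < α) (u g : n → ℝ)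
    (hu : ∀ i, 0 < u i) (hg : ∀ j, 0 < g j)
    (hmin : ∀ i j, α * u i * g j ≤ A i j) :
    ∃ r : ℝ, 0 < r ∧ ∃ w : n → ℝ, (∀ i, 0 < w i) ∧
      A *ᵥ w = r • w ∧
      (∀ v : n → ℂ, (A.map (Complex.ofReal ·)) *ᵥ v = (r : ℂ) • v →
        ∃ c : ℂ, v = c • fun i => (w i : ℂ)) ∧
      (∀ μ ∈ spectrum ℂ (A.map (Complex.ofReal ·)),
        ‖μ‖ ≤ r ∧ (‖μ‖ = r → μ = (r : ℂ))) := by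
  classical
  have hpos : ∀ i j, 0 < A i j := fun i j =>
    lt_of_lt_of_le (by have := mul_pos (mul_pos hα (hu i)) (hg j); linarith) (hmin i j)
  obtain ⟨r, hr, w, hw, hAw⟩ := pf_exists A hpos
  obtain ⟨r', hr', w', hw', hAw'⟩ := pf_exists Aᵀ (fun i j => hpos j i)
  have hMapply : ∀ (v : n → ℂ) (i : n),
      ((A.map (Complex.ofReal ·)) *ᵥ v) i = ∑ j, (A i j : ℂ) * v j := by
    intro v i
    simp [Matrix.mulVec, dotProduct, Matrix.map_apply]
  -- left eigenvector identity
  have hdotA : ∀ q : n → ℝ, w' ⬝ᵥ (A *ᵥ q) = r' * (w' ⬝ᵥ q) := by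
    intro q
    rw [Matrix.dotProduct_mulVec, ← Matrix.mulVec_transpose, hAw', smul_dotProduct,
      smul_eq_mul]
  have hdotpos : ∀ q : n → ℝ, (∀ i, 0 ≤ q i) → (∃ i, 0 < q i) → 0 < w' ⬝ᵥ q := by
    intro q hq ⟨i₀, hi₀⟩
    apply Finset.sum_pos' (fun i _ => mul_nonneg (hw' i).le (hq i))
    exact ⟨i₀, Finset.mem_univ _, mul_pos (hw' i₀) hi₀⟩
  have hrr : r' = r := by
    have h1 : w' ⬝ᵥ (A *ᵥ w) = r * (w' ⬝ᵥ w) := by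
      rw [hAw, dotProduct_smul, smul_eq_mul]
    have h2 := hdotA w
    have h3 : 0 < w' ⬝ᵥ w := hdotpos w (fun i => (hw i).le) ⟨Classical.arbitrary n, hw _⟩
    have := h1 ▸ h2
    exact mul_right_cancel₀ h3.ne' this.symm
  rw [hrr] at hdotA
  -- real eigenvector uniqueness specialized
  have huniq := pf_unique_real A hpos r w hw hAw
  refine ⟨r, hr, w, hw, hAw, ?_, ?_⟩
  · -- simplicity
    intro v hv
    set x : n → ℝ := fun i => (v i).re with hxdef
    set y : n → ℝ := fun i => (v i).im with hydef
    have hx : A *ᵥ x = r • x := by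
      funext i
      have h1 := congrFun hv i
      rw [hMapply] at h1
      have h2 := congrArg Complex.re h1
      simp only [Complex.re_sum, Complex.mul_re, Complex.ofReal_re, Complex.ofReal_im,
        Pi.smul_apply, smul_eq_mul, zero_mul, sub_zero] at h2
      simpa [Matrix.mulVec, dotProduct, hxdef] using h2
    have hy : A *ᵥ y = r • y := by
      funext i
      have h1 := congrFun hv i
      rw [hMapply] at h1
      have h2 := congrArg Complex.im h1
      simp only [Complex.im_sum, Complex.mul_im, Complex.ofReal_re, Complex.ofReal_im,
        Pi.smul_apply, smul_eq_mul, zero_mul, add_zero] at h2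
      simpa [Matrix.mulVec, dotProduct, hydef] using h2
    obtain ⟨a, hxa⟩ := huniq x hx
    obtain ⟨b, hyb⟩ := huniq y hy
    refine ⟨(a : ℂ) + (b : ℂ) * Complex.I, ?_⟩
    funext i
    have ha := congrFun hxa i
    have hb := congrFun hyb i
    simp only [Pi.smul_apply, smul_eq_mul] at ha hb ⊢
    apply Complex.ext
    · simp [Complex.add_re, Complex.mul_re, ← ha, hxdef]
    · simp [Complex.add_im, Complex.mul_im, ← hb, hydef]
  · -- spectrum
    intro μ hμ
    obtain ⟨v, hv0, hMv⟩ := pf_spec_eigen _ hμ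
    set x : n → ℝ := fun i => ‖v i‖ with hxdef
    have hxnn : ∀ i, 0 ≤ x i := fun i => norm_nonneg _
    have hxex : ∃ i, 0 < x i := by
      by_contra h
      push_neg at h
      apply hv0
      funext i
      exact norm_le_zero_iff.1 (h i)
    have hsub : ∀ i, ‖μ‖ * x i ≤ (A *ᵥ x) i := by
      intro i
      have h1 : ‖μ‖ * x i = ‖∑ j, (A i j : ℂ) * v j‖ := by
        rw [← hMapply, hMv]
        simp [hxdef, norm_smul]
      rw [h1]
      calc ‖∑ j, (A i j : ℂ) * v j‖ ≤ ∑ j, ‖(A i j : ℂ) * v j‖ := norm_sum_le _ _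
      _ = ∑ j, A i j * x j := by
          refine Finset.sum_congr rfl fun j _ => ?_
          rw [norm_mul, Complex.norm_real, Real.norm_eq_abs, abs_of_nonneg (hA i j)]
      _ = (A *ᵥ x) i := by simp [Matrix.mulVec, dotProduct]
    have hd : 0 < w' ⬝ᵥ x := hdotpos x hxnn hxex
    have hle : ‖μ‖ ≤ r := by
      have h2 : ‖μ‖ * (w' ⬝ᵥ x) ≤ r * (w' ⬝ᵥ x) := by
        calc ‖μ‖ * (w' ⬝ᵥ x) = ∑ i, w' i * (‖μ‖ * x i) := by
              rw [dotProduct, Finset.mul_sum]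
              exact Finset.sum_congr rfl fun i _ => by ring
        _ ≤ ∑ i, w' i * (A *ᵥ x) i :=
              Finset.sum_le_sum fun i _ => mul_le_mul_of_nonneg_left (hsub i) (hw' i).le
        _ = r * (w' ⬝ᵥ x) := hdotA x
      exact le_of_mul_le_mul_right h2 hd
    refine ⟨hle, fun hnorm => ?_⟩
    have heq : A *ᵥ x = r • x := by
      have hterm : ∀ i ∈ Finset.univ, 0 ≤ w' i * ((A *ᵥ x) i - r * x i) := by
        intro i _
        refine mul_nonneg (hw' i).le ?_
        have := hsub i
        rw [hnorm] at this
        linarith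
      have hsum0 : ∑ i, w' i * ((A *ᵥ x) i - r * x i) = 0 := by
        have : ∑ i, w' i * ((A *ᵥ x) i - r * x i)
            = (w' ⬝ᵥ (A *ᵥ x)) - r * (w' ⬝ᵥ x) := by
          simp only [dotProduct, Finset.mul_sum, ← Finset.sum_sub_distrib]
          exact Finset.sum_congr rfl fun i _ => by ring
        rw [this, hdotA x]
        ring
      have hall := (Finset.sum_eq_zero_iff_of_nonneg hterm).1 hsum0
      funext i
      have := hall i (Finset.mem_univ i)
      have h3 : (A *ᵥ x) i - r * x i = 0 := by
        rcases mul_eq_zero.1 this with h | h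
        · exact absurd h (hw' i).ne'
        · exact h
      simp only [Pi.smul_apply, smul_eq_mul]
      linarith
    obtain ⟨c, hxc⟩ := huniq x heq
    have hcpos : 0 < c := by
      obtain ⟨i, hi⟩ := hxex
      have h1 := congrFun hxc i
      simp only [Pi.smul_apply, smul_eq_mul] at h1
      nlinarith [hw i]
    have hxall : ∀ i, 0 < x i := by
      intro i
      have h1 := congrFun hxc i
      simp only [Pi.smul_apply, smul_eq_mul] at h1
      rw [h1]
      exact mul_pos hcpos (hw i)
    have hvne : ∀ i, v i ≠ 0 := fun i => norm_pos_iff.1 (hxall i)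
    have hμne : μ ≠ 0 := by
      intro h
      rw [h, norm_zero] at hnorm
      exact hr.ne hnorm
    set i₀ : n := Classical.arbitrary n with hi₀def
    set a : n → ℂ := fun j => (A i₀ j : ℂ) * v j with hadef
    have hTa : ∑ j, a j = μ * v i₀ := by
      rw [hadef, ← hMapply, hMv]
      simp
    have hTne : ∑ j, a j ≠ 0 := by
      rw [hTa]
      exact mul_ne_zero hμne (hvne i₀)
    have htri : ‖∑ j, a j‖ = ∑ j, ‖a j‖ := by
      rw [hTa, norm_mul, hnorm]
      have h1 : r * ‖v i₀‖ = (A *ᵥ x) i₀ := by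
        rw [heq]; simp [hxdef]
      rw [h1]
      have h2 : (A *ᵥ x) i₀ = ∑ j, A i₀ j * x j := by
        simp [Matrix.mulVec, dotProduct]
      rw [h2]
      refine Finset.sum_congr rfl fun j _ => ?_
      rw [hadef, norm_mul, Complex.norm_real, Real.norm_eq_abs, abs_of_nonneg (hA i₀ j)]
    obtain ⟨ζ, hζ1, hζ⟩ := pf_triangle_eq a hTne htri
    have hvj : ∀ j, v j = (x j : ℂ) * ζ := by
      intro j
      have h2 : ‖a j‖ = A i₀ j * x j := by
        rw [hadef]
        simp only
        rw [norm_mul, Complex.norm_real, Real.norm_eq_abs, abs_of_nonneg (hA i₀ j)]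
      have h1 : (A i₀ j : ℂ) * v j = ((A i₀ j * x j : ℝ) : ℂ) * ζ := by
        rw [← h2]
        exact hζ j
      have h3 : (A i₀ j : ℂ) ≠ 0 := by
        exact_mod_cast (hpos i₀ j).ne'
      apply mul_left_cancel₀ h3
      rw [h1]
      push_cast
      ring
    have hfin := congrFun hMv i₀
    rw [hMapply] at hfin
    have hLHS : ∑ j, (A i₀ j : ℂ) * v j = ((r * x i₀ : ℝ) : ℂ) * ζ := by
      calc ∑ j, (A i₀ j : ℂ) * v j = ∑ j, ((A i₀ j * x j : ℝ) : ℂ) * ζ := by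
            refine Finset.sum_congr rfl fun j _ => ?_
            rw [hvj j]
            push_cast
            ring
      _ = ((∑ j, A i₀ j * x j : ℝ) : ℂ) * ζ := by
            rw [← Finset.sum_mul]
            push_cast
            ring
      _ = ((r * x i₀ : ℝ) : ℂ) * ζ := by
            have hAx : ∑ j, A i₀ j * x j = r * x i₀ := by
              have h2 : (A *ᵥ x) i₀ = ∑ j, A i₀ j * x j := by
                simp [Matrix.mulVec, dotProduct]
              rw [← h2, heq]
              simp
            rw [hAx]
    simp only [Pi.smul_apply, smul_eq_mul] at hfin
    rw [hLHS, hvj i₀] at hfin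
    have hfactor : ((x i₀ : ℂ)) * ζ ≠ 0 := by
      apply mul_ne_zero
      · exact_mod_cast (hxall i₀).ne'
      · intro h
        rw [h, norm_zero] at hζ1
        exact one_ne_zero hζ1.symm
    have : ((r : ℂ)) * ((x i₀ : ℂ) * ζ) = μ * ((x i₀ : ℂ) * ζ) := by
      rw [← hfin]
      push_cast
      ring
    exact (mul_right_cancel₀ hfactor this).symm
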